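/- Let s ≥ 1, n ≥ 1, γ ∈ ℝ, let θ ∈ 𝕋^s have pairwise distinct entries and let g ∈ ℂ^s. Then for every 0 ≤ k ≤ s−1, the Laurent polynomial M = L + e^{iγ}·L̃ + e^{−iγ}·L̃* satisfies M(conj(θ_k)) = |g_k|² · |t_k(conj(θ_k))|² · |e^{iγ}·θ_k^n − 1|². Consequently, knowledge of θ and of c·M for an unknown real constant c > 0 determines the magnitudes |g_k| up to a common positive real scalar. -/

import Mathlib

open Polynomial Finset Complex

/-- `t_l(z) = ∏_{i ≠ l} (z·θ_i − 1)`. -/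
noncomputable def tPoly (s : ℕ) (θ : Fin s → ℂ) (l : Fin s) : Polynomial ℂ :=
  ∏ i ∈ Finset.univ.erase l, (Polynomial.C (θ i) * Polynomial.X - 1)

/-- `û(z) = Σ_l g_l · θ_l^n · t_l(z)`. -/
noncomputable def uHat (s n : ℕ) (θ g : Fin s → ℂ) : Polynomial ℂ :=
  ∑ l : Fin s, Polynomial.C (g l * θ l ^ n) * tPoly s θ l

/-- `ũ(z) = −Σ_l g_l · t_l(z)`. -/
noncomputable def uTilde (s : ℕ) (θ g : Fin s → ℂ) : Polynomial ℂ :=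
  -∑ l : Fin s, Polynomial.C (g l) * tPoly s θ l

/-- cf. Proposition `prop:unique_g_abs_4s`: for each `k`, the Laurent
polynomial `M = L + e^{iγ}·L̃ + e^{−iγ}·L̃*` (here evaluated on `𝕋`, where
`L(w) = û(w)conj(û(w)) + ũ(w)conj(ũ(w))` and `L̃(w) = û(w)conj(ũ(w))`) satisfies
`M(conj θ_k) = |g_k|²·|t_k(conj θ_k)|²·|e^{iγ}θ_k^n − 1|²`. -/
theorem M_at_conj_theta (s n : ℕ) (hs : 1 ≤ s) (hn : 1 ≤ n) (γ : ℝ)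
    (θ : Fin s → ℂ) (hθT : ∀ l, ‖θ l‖ = 1) (hθinj : Function.Injective θ)
    (g : Fin s → ℂ) :
    ∀ k : Fin s,
      ((uHat s n θ g).eval ((starRingEnd ℂ) (θ k)) *
          (starRingEnd ℂ) ((uHat s n θ g).eval ((starRingEnd ℂ) (θ k)))
        + (uTilde s θ g).eval ((starRingEnd ℂ) (θ k)) *
          (starRingEnd ℂ) ((uTilde s θ g).eval ((starRingEnd ℂ) (θ k))))
      + Complex.exp ((γ : ℂ) * Complex.I) *
          ((uHat s n θ g).eval ((starRingEnd ℂ) (θ k)) *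
            (starRingEnd ℂ) ((uTilde s θ g).eval ((starRingEnd ℂ) (θ k))))
      + Complex.exp (-(γ : ℂ) * Complex.I) *
          (starRingEnd ℂ)
            ((uHat s n θ g).eval ((starRingEnd ℂ) (θ k)) *
              (starRingEnd ℂ) ((uTilde s θ g).eval ((starRingEnd ℂ) (θ k)))) =
      ((Complex.normSq (g k) *
          Complex.normSq ((tPoly s θ k).eval ((starRingEnd ℂ) (θ k))) *
          Complex.normSq (Complex.exp ((γ : ℂ) * Complex.I) * θ k ^ n - 1) : ℝ) : ℂ) := by
  intro k
  set w := (starRingEnd ℂ) (θ k) with hw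
  have hwk : θ k * w = 1 := by
    rw [hw, Complex.mul_conj]
    norm_cast
    rw [Complex.normSq_eq_norm_sq, hθT k, one_pow]
  have hT0 : ∀ l, l ≠ k → (tPoly s θ l).eval w = 0 := by
    intro l hl
    unfold tPoly
    rw [Polynomial.eval_prod]
    refine Finset.prod_eq_zero (Finset.mem_erase.mpr ⟨Ne.symm hl, Finset.mem_univ k⟩) ?_
    simp [hwk]
  have hU : (uHat s n θ g).eval w = g k * θ k ^ n * (tPoly s θ k).eval w := by
    unfold uHat
    rw [Polynomial.eval_finset_sum,
      Finset.sum_eq_single k (fun l _ hl => by simp [hT0 l hl]) (by simp)]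
    simp
  have hV : (uTilde s θ g).eval w = -(g k * (tPoly s θ k).eval w) := by
    unfold uTilde
    rw [Polynomial.eval_neg, Polynomial.eval_finset_sum,
      Finset.sum_eq_single k (fun l _ hl => by simp [hT0 l hl]) (by simp)]
    simp
  have hconjφ : (starRingEnd ℂ) (Complex.exp ((γ : ℂ) * Complex.I))
      = Complex.exp (-(γ : ℂ) * Complex.I) := by
    rw [← Complex.exp_conj]
    congr 1
    simp [Complex.conj_I]
  have hφ : Complex.exp ((γ : ℂ) * Complex.I) * Complex.exp (-(γ : ℂ) * Complex.I) = 1 := by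
    rw [← Complex.exp_add]
    norm_num
  rw [hU, hV]
  simp only [Complex.ofReal_mul, ← Complex.mul_conj, map_mul, map_neg, map_sub, map_pow,
    map_one, Complex.conj_conj, hconjφ]
  linear_combination (-(g k * (starRingEnd ℂ) (g k) * (tPoly s θ k).eval w
    * (starRingEnd ℂ) ((tPoly s θ k).eval w) * θ k ^ n * w ^ n)) * hφ
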